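/- Fix 0 < γ ≤ 1 and let λ₁(x) = 1/(1+x) for x ∈ (0,1). Then for every integer n ≥ 1 and every x ∈ (0,1): (S_γ)ⁿ λ₁(x) ≤ (2γ/(1+γ))ⁿ · λ₁(x), where (S_γ)ⁿ denotes the n-fold iterate of S_γ (all the arising series of nonnegative terms converge). -/

import Mathlib

open Real

/-- The subtransfer operator `S_γ` of the Gauss-type map `x ↦ {γ/x} mod 1`
(summation over `j ≥ 1`, written as `j + 1` with `j : ℕ`). -/
noncomputable def Ssub (γ : ℝ) (f : ℝ → ℝ) (x : ℝ) : ℝ :=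
  ∑' j : ℕ, (γ / (((j : ℝ) + 1) + x) ^ 2) * f (γ / (((j : ℝ) + 1) + x))

lemma mem_Ioo_aux (γ x : ℝ) (hγ0 : 0 < γ) (hγ1 : γ ≤ 1) (hx : x ∈ Set.Ioo (0:ℝ) 1)
    (j : ℕ) : γ / (((j : ℝ) + 1) + x) ∈ Set.Ioo (0:ℝ) 1 := by
  obtain ⟨hx0, hx1⟩ := hx
  have hj : (0:ℝ) ≤ (j:ℝ) := Nat.cast_nonneg j
  have hD : (1:ℝ) < ((j:ℝ)+1) + x := by linarith
  constructor
  · positivity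
  · rw [div_lt_one (by linarith)]; linarith

lemma telescope_hasSum (x : ℝ) (hx0 : 0 < x) :
    HasSum (fun j : ℕ => 1/(((j:ℝ)+1)+x) - 1/((((j:ℝ)+1)+x)+1)) (1/(1+x)) := by
  set F : ℕ → ℝ := fun j => 1/(((j:ℝ)+1)+x) with hF
  have hterm : (fun j : ℕ => 1/(((j:ℝ)+1)+x) - 1/((((j:ℝ)+1)+x)+1))
      = fun j => F j - F (j+1) := by
    funext j; simp only [hF]; push_cast; ring_nf
  have hnn : ∀ j : ℕ, 0 ≤ 1/(((j:ℝ)+1)+x) - 1/((((j:ℝ)+1)+x)+1) := by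
    intro j
    have hj : (0:ℝ) ≤ (j:ℝ) := Nat.cast_nonneg j
    have h1 : (0:ℝ) < ((j:ℝ)+1)+x := by linarith
    have h2 : (0:ℝ) < (((j:ℝ)+1)+x)+1 := by linarith
    have := one_div_le_one_div_of_le h1 (by linarith : ((j:ℝ)+1)+x ≤ (((j:ℝ)+1)+x)+1)
    linarith
  have h1 : Filter.Tendsto (fun j : ℕ => ((j:ℝ)+1+x)) Filter.atTop Filter.atTop := by
    have := Filter.tendsto_atTop_add_const_right Filter.atTop (1+x)
      (tendsto_natCast_atTop_atTop (R := ℝ))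
    simpa [add_assoc] using this
  have hFlim : Filter.Tendsto F Filter.atTop (nhds 0) := by
    refine (h1.inv_tendsto_atTop).congr fun j => ?_
    simp [hF, one_div]
  have hps : ∀ n : ℕ, ∑ i ∈ Finset.range n, (F i - F (i+1)) = F 0 - F n :=
    fun n => Finset.sum_range_sub' F n
  rw [hasSum_iff_tendsto_nat_of_nonneg hnn]
  have h0 : F 0 = 1/(1+x) := by simp [hF]
  have hlim : Filter.Tendsto (fun n : ℕ => F 0 - F n) Filter.atTop (nhds (1/(1+x))) := by
    have := (tendsto_const_nhds : Filter.Tendsto (fun _ : ℕ => F 0) Filter.atTop (nhds (F 0))).sub hFlim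
    simpa [h0] using this
  refine hlim.congr fun n => ?_
  rw [← hps n]
  apply Finset.sum_congr rfl
  intro i _
  have := congrFun hterm i
  linarith [this.symm.le, this.le]

lemma step (γ C : ℝ) (hγ0 : 0 < γ) (hγ1 : γ ≤ 1) (hC : 0 ≤ C) (g : ℝ → ℝ)
    (hg : ∀ y ∈ Set.Ioo (0:ℝ) 1, 0 ≤ g y ∧ g y ≤ C * (1/(1+y)))
    (x : ℝ) (hx : x ∈ Set.Ioo (0:ℝ) 1) :
    Summable (fun j : ℕ => (γ / (((j:ℝ)+1)+x)^2) * g (γ / (((j:ℝ)+1)+x))) ∧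
    0 ≤ Ssub γ g x ∧
    Ssub γ g x ≤ (2*γ/(1+γ)) * C * (1/(1+x)) := by
  obtain ⟨hx0, hx1⟩ := hx
  set c : ℝ := 2*γ/(1+γ) with hc
  have hc0 : 0 < c := by positivity
  -- basic facts on the denominator
  have hD1 : ∀ j : ℕ, (1:ℝ) < ((j:ℝ)+1) + x := fun j => by
    have := Nat.cast_nonneg (α := ℝ) j; linarith
  have hD0 : ∀ j : ℕ, (0:ℝ) < ((j:ℝ)+1) + x := fun j => lt_trans one_pos (hD1 j)
  -- nonneg of each term
  have hnn : ∀ j : ℕ, 0 ≤ (γ / (((j:ℝ)+1)+x)^2) * g (γ / (((j:ℝ)+1)+x)) := by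
    intro j
    have hy := mem_Ioo_aux γ x hγ0 hγ1 ⟨hx0, hx1⟩ j
    have := (hg _ hy).1
    have h2 : 0 < (((j:ℝ)+1)+x)^2 := by positivity
    positivity
  -- per-term upper bound by the telescoping majorant
  have hle : ∀ j : ℕ, (γ / (((j:ℝ)+1)+x)^2) * g (γ / (((j:ℝ)+1)+x)) ≤
      (C * c) * (1/(((j:ℝ)+1)+x) - 1/((((j:ℝ)+1)+x)+1)) := by
    intro j
    set D : ℝ := ((j:ℝ)+1) + x with hDdef
    have hD : 1 < D := hD1 j
    have hDpos : 0 < D := hD0 j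
    have hy := mem_Ioo_aux γ x hγ0 hγ1 ⟨hx0, hx1⟩ j
    have hgle := (hg _ hy).2
    have h1y : 1 + γ/D = (D+γ)/D := by field_simp
    have hbound1 : (γ / D^2) * g (γ/D) ≤ (γ / D^2) * (C * (D/(D+γ))) := by
      apply mul_le_mul_of_nonneg_left _ (by positivity)
      calc g (γ/D) ≤ C * (1/(1+γ/D)) := hgle
        _ = C * (D/(D+γ)) := by rw [h1y]; rw [one_div_div]
    have key : (γ / D^2) * (C * (D/(D+γ))) ≤ (C*c) * (1/D - 1/(D+1)) := by
      have hDγ : 0 < D + γ := by linarith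
      have hD1' : 0 < D + 1 := by linarith
      have hineq : γ * (D+1) * (1+γ) ≤ 2*γ*(D+γ) :=
        by nlinarith [mul_nonneg hγ0.le (sub_nonneg.2 hD.le), sub_nonneg.2 hγ1]
      have hL : γ / D^2 * (C * (D/(D+γ))) = (C*γ) / (D*(D+γ)) := by
        field_simp
      have hR : (C*c) * (1/D - 1/(D+1)) = (C*(2*γ)) / ((1+γ)*(D*(D+1))) := by
        rw [hc]; field_simp; ring
      rw [hL, hR, div_le_div_iff₀ (by positivity) (by positivity)]
      nlinarith [mul_le_mul_of_nonneg_left hineq (mul_nonneg hC hDpos.le)]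
    exact hbound1.trans key
  -- summability of the majorant
  have hmaj : HasSum (fun j : ℕ => (C*c) * (1/(((j:ℝ)+1)+x) - 1/((((j:ℝ)+1)+x)+1)))
      ((C*c) * (1/(1+x))) := (telescope_hasSum x hx0).mul_left (C*c)
  have hsum : Summable (fun j : ℕ => (γ / (((j:ℝ)+1)+x)^2) * g (γ / (((j:ℝ)+1)+x))) :=
    Summable.of_nonneg_of_le hnn hle hmaj.summable
  refine ⟨hsum, tsum_nonneg hnn, ?_⟩
  calc Ssub γ g x ≤ ∑' j : ℕ, (C*c) * (1/(((j:ℝ)+1)+x) - 1/((((j:ℝ)+1)+x)+1)) :=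
        Summable.tsum_le_tsum hle hsum hmaj.summable
    _ = (C*c) * (1/(1+x)) := hmaj.tsum_eq
    _ = c * C * (1/(1+x)) := by ring

lemma iter_bound (γ : ℝ) (hγ0 : 0 < γ) (hγ1 : γ ≤ 1) :
    ∀ n : ℕ, ∀ x ∈ Set.Ioo (0:ℝ) 1,
      0 ≤ (Ssub γ)^[n] (fun y => 1/(1+y)) x ∧
      (Ssub γ)^[n] (fun y => 1/(1+y)) x ≤ (2*γ/(1+γ))^n * (1/(1+x)) := by
  intro n
  induction n with
  | zero => intro x hx; obtain ⟨hx0, _⟩ := hx; constructor <;> simp <;> positivity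
  | succ n ih =>
    intro x hx
    have hC : (0:ℝ) ≤ (2*γ/(1+γ))^n := by positivity
    have hst := step γ ((2*γ/(1+γ))^n) hγ0 hγ1 hC ((Ssub γ)^[n] (fun y => 1/(1+y)))
      (fun y hy => ih y hy) x hx
    rw [Function.iterate_succ_apply']
    exact ⟨hst.2.1, by calc Ssub γ ((Ssub γ)^[n] (fun y => 1/(1+y))) x
        ≤ (2*γ/(1+γ)) * (2*γ/(1+γ))^n * (1/(1+x)) := hst.2.2
      _ = (2*γ/(1+γ))^(n+1) * (1/(1+x)) := by ring⟩

/-- Geometric decay of the `S_γ`-iterates of `λ₁(x) = 1/(1+x)`. -/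
theorem stmt_15 (γ : ℝ) (hγ0 : 0 < γ) (hγ1 : γ ≤ 1) :
    ∀ n : ℕ, 1 ≤ n →
      (∀ k : ℕ, k < n → ∀ x ∈ Set.Ioo (0 : ℝ) 1,
        Summable fun j : ℕ =>
          (γ / (((j : ℝ) + 1) + x) ^ 2) *
            ((Ssub γ)^[k] (fun y => 1 / (1 + y))) (γ / (((j : ℝ) + 1) + x))) ∧
      ∀ x ∈ Set.Ioo (0 : ℝ) 1,
        (Ssub γ)^[n] (fun y => 1 / (1 + y)) x ≤
          (2 * γ / (1 + γ)) ^ n * (1 / (1 + x)) := by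
  intro n _
  constructor
  · intro k _ x hx
    have hC : (0:ℝ) ≤ (2*γ/(1+γ))^k := by positivity
    exact (step γ ((2*γ/(1+γ))^k) hγ0 hγ1 hC _
      (fun y hy => iter_bound γ hγ0 hγ1 k y hy) x hx).1
  · intro x hx
    exact (iter_bound γ hγ0 hγ1 n x hx).2
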